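/- Let R be a commutative ring with 1 and let n ∈ ℕ. If A, B ∈ UT_n(R) are unitriangular matrices with all first-superdiagonal entries equal to 1 (a_{i,i+1} = b_{i,i+1} = 1 for all 1 ≤ i ≤ n−1), then A and B are conjugate in UT_n(R). -/
import Mathlib

open Matrix Finset

section helpers
variable {R : Type*} [CommRing R] {n : ℕ}

lemma diag_mul_tri {P Q : Matrix (Fin n) (Fin n) R} (hP : P.BlockTriangular id)
    (hQ : Q.BlockTriangular id) (i : Fin n) : (P * Q) i i = P i i * Q i i := by
  rw [Matrix.mul_apply]
  apply Finset.sum_eq_single i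
  · intro l _ hl
    rcases lt_or_gt_of_ne hl with h | h
    · rw [hP h, zero_mul]
    · rw [hQ h, mul_zero]
  · intro h; exact absurd (mem_univ i) h

lemma pow_entry {N : Matrix (Fin n) (Fin n) R}
    (h0 : ∀ i j : Fin n, (j : ℕ) ≤ i → N i j = 0)
    (h1 : ∀ i j : Fin n, (j : ℕ) = i + 1 → N i j = 1) (k : ℕ) :
    ∀ i j : Fin n, ((j : ℕ) < i + k → (N ^ k) i j = 0) ∧
      ((j : ℕ) = i + k → (N ^ k) i j = 1) := by
  induction k with
  | zero =>
    intro i j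
    refine ⟨fun h => ?_, fun h => ?_⟩
    · have hne : i ≠ j := fun he => by subst he; omega
      rw [pow_zero, Matrix.one_apply_ne hne]
    · have : i = j := Fin.ext (by omega)
      subst this
      rw [pow_zero, Matrix.one_apply_eq]
  | succ k ih =>
    intro i j
    rw [pow_succ', Matrix.mul_apply]
    constructor
    · intro h
      apply Finset.sum_eq_zero
      intro l _
      rcases le_or_gt (l : ℕ) i with hl | hl
      · rw [h0 i l hl, zero_mul]
      · rw [((ih l j).1 (by omega)), mul_zero]
    · intro h
      have hjn := j.2
      have hin : (i : ℕ) + 1 < n := by omega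
      rw [Finset.sum_eq_single (⟨i + 1, hin⟩ : Fin n)]
      · rw [h1 i ⟨i + 1, hin⟩ rfl, (ih ⟨i + 1, hin⟩ j).2 (by simp; omega), one_mul]
      · intro l _ hl
        rcases le_or_gt (l : ℕ) i with h' | h'
        · rw [h0 i l h', zero_mul]
        · have : (i : ℕ) + 1 < l := by
            rcases Nat.lt_or_ge (i + 1) (l : ℕ) with h2 | h2
            · exact h2
            · exact absurd (Fin.ext (by simp; omega) : l = ⟨i + 1, hin⟩) hl
          rw [(ih l j).1 (by omega), mul_zero]
      · intro h; exact absurd (mem_univ _) h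

lemma conj_to_jordan (hn : 0 < n) (A : Matrix (Fin n) (Fin n) R)
    (hAut : A.BlockTriangular id) (hAdiag : ∀ i, A i i = 1)
    (hAsup : ∀ i j : Fin n, (j : ℕ) = i + 1 → A i j = 1) :
    ∃ X : Matrix (Fin n) (Fin n) R, X.BlockTriangular id ∧ (∀ i, X i i = 1) ∧
      A * X = X * (1 + Matrix.of (fun i j : Fin n => if (j : ℕ) = i + 1 then (1 : R) else 0)) := by
  set N : Matrix (Fin n) (Fin n) R := A - 1 with hN
  have h0 : ∀ i j : Fin n, (j : ℕ) ≤ i → N i j = 0 := by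
    intro i j h
    rcases eq_or_lt_of_le h with h | h
    · have : j = i := Fin.ext h
      subst this
      simp [hN, Matrix.sub_apply, hAdiag]
    · have hne : i ≠ j := fun he => by subst he; omega
      have hz : A i j = 0 := hAut (show (id j : Fin n) < id i from h)
      simp [hN, Matrix.sub_apply, hz, Matrix.one_apply_ne hne]
  have h1 : ∀ i j : Fin n, (j : ℕ) = i + 1 → N i j = 1 := by
    intro i j h
    have hne : i ≠ j := fun he => by subst he; omega
    simp [hN, Matrix.sub_apply, hAsup i j h, Matrix.one_apply_ne hne]
  have key := pow_entry h0 h1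
  set last : Fin n := ⟨n - 1, by omega⟩ with hlast
  have hlv : (last : ℕ) = n - 1 := rfl
  set X : Matrix (Fin n) (Fin n) R :=
    Matrix.of (fun i j : Fin n => (N ^ (n - 1 - j)) i last) with hX
  set S : Matrix (Fin n) (Fin n) R :=
    Matrix.of (fun i j : Fin n => if (j : ℕ) = i + 1 then (1 : R) else 0) with hS
  have hXut : X.BlockTriangular id := by
    intro i j hij
    have hij' : (j : ℕ) < i := hij
    have := j.2
    exact (key _ i last).1 (by omega)
  have hXdiag : ∀ i, X i i = 1 := by
    intro i
    have := i.2
    exact (key _ i last).2 (by omega)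
  have hNX : N * X = X * S := by
    ext i j
    have hjn := j.2
    have hL : (N * X) i j = (N ^ (n - 1 - (j : ℕ) + 1)) i last := by
      rw [pow_succ', Matrix.mul_apply, Matrix.mul_apply]
      rfl
    rw [hL, Matrix.mul_apply]
    rcases Nat.eq_zero_or_pos (j : ℕ) with hj | hj
    · rw [Finset.sum_eq_zero, (key _ i last).1 (by omega)]
      intro l _
      rw [hS]
      simp only [Matrix.of_apply]
      rw [if_neg (by omega), mul_zero]
    · have hj1 : (j : ℕ) - 1 < n := by omega
      rw [Finset.sum_eq_single (⟨(j : ℕ) - 1, hj1⟩ : Fin n)]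
      · have he : n - 1 - (((⟨(j : ℕ) - 1, hj1⟩ : Fin n)) : ℕ) = n - 1 - (j : ℕ) + 1 := by
          show n - 1 - ((j : ℕ) - 1) = n - 1 - (j : ℕ) + 1
          omega
        rw [hS, hX]
        simp only [Matrix.of_apply]
        rw [if_pos (show (j : ℕ) = (j : ℕ) - 1 + 1 from by omega), mul_one, he]
      · intro l _ hl
        rw [hS]
        simp only [Matrix.of_apply]
        rw [if_neg (fun hc => hl (Fin.ext (by simp at hc ⊢; omega))), mul_zero]
      · intro h; exact absurd (mem_univ _) h
  refine ⟨X, hXut, hXdiag, ?_⟩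
  have hA : A = 1 + N := by rw [hN]; abel
  rw [hA, add_mul, one_mul, hNX, mul_add, mul_one]

end helpers

theorem stmt_11 {R : Type*} [CommRing R] (n : ℕ)
    (A B : Matrix (Fin n) (Fin n) R)
    (hAut : A.BlockTriangular id) (hAdiag : ∀ i, A i i = 1)
    (hBut : B.BlockTriangular id) (hBdiag : ∀ i, B i i = 1)
    (hAsup : ∀ i j : Fin n, j.val = i.val + 1 → A i j = 1)
    (hBsup : ∀ i j : Fin n, j.val = i.val + 1 → B i j = 1) :
    ∃ X : Matrix (Fin n) (Fin n) R,
      X.BlockTriangular id ∧ (∀ i, X i i = 1) ∧ X⁻¹ * A * X = B := by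
  rcases Nat.eq_zero_or_pos n with hn | hn
  · subst hn
    refine ⟨1, fun i j h => absurd i.2 (by omega), fun i => Matrix.one_apply_eq i, ?_⟩
    have : A = B := by ext i j; exact absurd i.2 (by omega)
    simp [this]
  obtain ⟨XA, hXAut, hXAdiag, hXAeq⟩ := conj_to_jordan hn A hAut hAdiag hAsup
  obtain ⟨XB, hXBut, hXBdiag, hXBeq⟩ := conj_to_jordan hn B hBut hBdiag hBsup
  set S : Matrix (Fin n) (Fin n) R :=
    1 + Matrix.of (fun i j : Fin n => if (j : ℕ) = i + 1 then (1 : R) else 0) with hS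
  have detA : IsUnit XA.det := by
    rw [Matrix.det_of_upperTriangular hXAut]
    simp [hXAdiag]
  have detB : IsUnit XB.det := by
    rw [Matrix.det_of_upperTriangular hXBut]
    simp [hXBdiag]
  haveI : Invertible XA := XA.invertibleOfIsUnitDet detA
  haveI : Invertible XB := XB.invertibleOfIsUnitDet detB
  have hXBinv_ut : (XB⁻¹).BlockTriangular id := Matrix.blockTriangular_inv_of_blockTriangular hXBut
  have e1 : XA⁻¹ * A * XA = S := by
    rw [mul_assoc, hXAeq, ← mul_assoc, Matrix.nonsing_inv_mul _ detA, one_mul]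
  have e2 : XB⁻¹ * B * XB = S := by
    rw [mul_assoc, hXBeq, ← mul_assoc, Matrix.nonsing_inv_mul _ detB, one_mul]
  refine ⟨XA * XB⁻¹, hXAut.mul hXBinv_ut, ?_, ?_⟩
  · intro i
    have hdiag : (XB⁻¹) i i = 1 := by
      have h1 : (XB * XB⁻¹) i i = 1 := by
        rw [Matrix.mul_nonsing_inv _ detB, Matrix.one_apply_eq]
      rw [diag_mul_tri hXBut hXBinv_ut, hXBdiag, one_mul] at h1
      exact h1
    rw [diag_mul_tri hXAut hXBinv_ut, hXAdiag, hdiag, one_mul]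
  · rw [Matrix.mul_inv_rev, Matrix.nonsing_inv_nonsing_inv _ detB]
    calc XB * XA⁻¹ * A * (XA * XB⁻¹)
        = XB * (XA⁻¹ * A * XA) * XB⁻¹ := by simp only [mul_assoc]
      _ = XB * S * XB⁻¹ := by rw [e1]
      _ = XB * (XB⁻¹ * B * XB) * XB⁻¹ := by rw [e2]
      _ = (XB * XB⁻¹) * B * (XB * XB⁻¹) := by simp only [mul_assoc]
      _ = B := by rw [Matrix.mul_nonsing_inv _ detB, one_mul, mul_one]
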